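/- Let u, v ∈ (0,1) and let α, β ∈ (−1,1) with α ≠ 0, β ≠ 0, and set ρ = αβ. Then C(u,v;ρ) = ∫_{−∞}^{∞} Φ((Φ⁻¹(u) − α·z)/√(1−α²)) · Φ((Φ⁻¹(v) − β·z)/√(1−β²)) · φ(z) dz. -/

import Mathlib

open MeasureTheory Real Set

/-- Standard normal density φ. -/
noncomputable def stdPdf (x : ℝ) : ℝ :=
  (1 / Real.sqrt (2 * Real.pi)) * Real.exp (-x ^ 2 / 2)

/-- Standard normal distribution function Φ. -/
noncomputable def stdCdf (h : ℝ) : ℝ := ∫ x in Set.Iio h, stdPdf x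

/-- Inverse Φ⁻¹ of the standard normal distribution function (on (0,1)). -/
noncomputable def stdQuantile : ℝ → ℝ := Function.invFun stdCdf

/-- Bivariate standard normal density φ₂ with correlation ρ. -/
noncomputable def binPdf (x y ρ : ℝ) : ℝ :=
  (1 / (2 * Real.pi * Real.sqrt (1 - ρ ^ 2))) *
    Real.exp (-(x ^ 2 - 2 * ρ * x * y + y ^ 2) / (2 * (1 - ρ ^ 2)))

/-- Bivariate standard normal distribution function Φ₂. -/
noncomputable def binCdf (h k ρ : ℝ) : ℝ :=
  ∫ x in Set.Iio h, ∫ y in Set.Iio k, binPdf x y ρ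

/-- The bivariate normal copula C(u,v;ρ) = Φ₂(Φ⁻¹(u),Φ⁻¹(v);ρ). -/
noncomputable def normCopula (u v ρ : ℝ) : ℝ :=
  binCdf (stdQuantile u) (stdQuantile v) ρ

/-- g(u;ρ) = Φ(√((1−ρ)/(1+ρ))·Φ⁻¹(u)). -/
noncomputable def gFun (u ρ : ℝ) : ℝ :=
  stdCdf (Real.sqrt ((1 - ρ) / (1 + ρ)) * stdQuantile u)

lemma stdPdf_nonneg (x : ℝ) : 0 ≤ stdPdf x := by unfold stdPdf; positivity

lemma continuous_stdPdf : Continuous stdPdf := by unfold stdPdf; fun_prop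

lemma stdPdf_eq (x : ℝ) : stdPdf x = (1 / Real.sqrt (2 * Real.pi)) * Real.exp (-(1/2) * x ^ 2) := by
  unfold stdPdf; ring_nf

lemma integrable_stdPdf : Integrable stdPdf := by
  have h := (integrable_exp_neg_mul_sq (by norm_num : (0:ℝ) < 1/2)).const_mul
    (1 / Real.sqrt (2 * Real.pi))
  exact h.congr (Filter.Eventually.of_forall fun x => (stdPdf_eq x).symm)

lemma integral_stdPdf : ∫ x, stdPdf x = 1 := by
  simp_rw [stdPdf_eq]
  rw [integral_const_mul, integral_gaussian]
  rw [div_div_eq_mul_div, div_one, one_div, inv_mul_eq_div, div_eq_one_iff_eq]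
  · congr 1; ring
  · positivity

lemma integral_Iio_affine (f : ℝ → ℝ) (c b : ℝ) {r : ℝ} (hr : 0 < r) :
    ∫ x in Set.Iio b, f ((x - c) / r) = r * ∫ w in Set.Iio ((b - c) / r), f w := by
  have hmap : Measure.map (fun w : ℝ => r * w + c) volume
      = ENNReal.ofReal r⁻¹ • volume := by
    rw [show (fun w : ℝ => r * w + c) = (fun x : ℝ => x + c) ∘ (fun w : ℝ => r * w) from rfl,
      ← Measure.map_map (by fun_prop) (by fun_prop),
      Real.map_volume_mul_left hr.ne', Measure.map_smul, map_add_right_eq_self,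
      abs_of_pos (inv_pos.2 hr)]
  have hemb : MeasurableEmbedding (fun w : ℝ => r * w + c) :=
    ((Homeomorph.mulLeft₀ r hr.ne').trans (Homeomorph.addRight c)).measurableEmbedding
  have h1 := hemb.setIntegral_map (μ := volume) (g := fun x => f ((x - c)/r)) (s := Set.Iio b)
  rw [hmap] at h1
  have hpre : (fun w : ℝ => r * w + c) ⁻¹' Set.Iio b = Set.Iio ((b - c)/r) := by
    ext x
    simp only [Set.mem_preimage, Set.mem_Iio, lt_div_iff₀ hr]
    constructor <;> intro hx <;> nlinarith
  rw [hpre] at h1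
  simp only [Measure.restrict_smul, integral_smul_measure, ENNReal.toReal_ofReal
    (inv_nonneg.2 hr.le), smul_eq_mul] at h1
  have h2 : ∀ x : ℝ, f ((r * x + c - c)/r) = f x := by
    intro x; rw [add_sub_cancel_right, mul_div_cancel_left₀ _ hr.ne']
  simp only [h2] at h1
  rw [← h1]; field_simp

lemma integral_kernel (c : ℝ) {r : ℝ} (hr : 0 < r) :
    ∫ x, (1/r) * stdPdf ((x - c)/r) = 1 := by
  rw [integral_const_mul]
  have h1 : (fun x => stdPdf ((x - c)/r)) = fun x => (fun y => stdPdf (y / r)) (x - c) := rfl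
  rw [h1, integral_sub_right_eq_self (fun y => stdPdf (y / r)) c,
    Measure.integral_comp_div stdPdf r, smul_eq_mul, integral_stdPdf, abs_of_pos hr]
  field_simp

lemma integrable_kernel (c : ℝ) {r : ℝ} (hr : 0 < r) :
    Integrable (fun x => (1/r) * stdPdf ((x - c)/r)) :=
  (((integrable_stdPdf.comp_div hr.ne').comp_sub_right c)).const_mul _

lemma conv_eq_binPdf {α β : ℝ} (x y : ℝ) (hα : α ∈ Set.Ioo (-1:ℝ) 1) (hβ : β ∈ Set.Ioo (-1:ℝ) 1) :
    (∫ z, (1 / Real.sqrt (1 - α^2)) * stdPdf ((x - α*z)/Real.sqrt (1 - α^2)) *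
        ((1 / Real.sqrt (1 - β^2)) * stdPdf ((y - β*z)/Real.sqrt (1 - β^2))) * stdPdf z)
      = binPdf x y (α*β) := by
  obtain ⟨hα1, hα2⟩ := hα
  obtain ⟨hβ1, hβ2⟩ := hβ
  have hs2 : (0:ℝ) < 1 - α^2 := by nlinarith
  have ht2 : (0:ℝ) < 1 - β^2 := by nlinarith
  have hρ2 : (0:ℝ) < 1 - (α*β)^2 := by nlinarith
  set s2 : ℝ := 1 - α^2 with hs2d
  set t2 : ℝ := 1 - β^2 with ht2d
  have hA : (0:ℝ) < α^2/s2 + β^2/t2 + 1 := by positivity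
  set A : ℝ := α^2/s2 + β^2/t2 + 1 with hAd
  set m : ℝ := (α*x/s2 + β*y/t2)/A with hmd
  set R : ℝ := (x^2 - 2*(α*β)*x*y + y^2)/(1 - (α*β)^2) with hRd
  set K : ℝ := (1/(Real.sqrt s2 * Real.sqrt t2)) * (1/Real.sqrt (2*Real.pi))^3 * Real.exp (-R/2)
    with hKd
  have hpi : (0:ℝ) < 2 * Real.pi := by positivity
  have hss : Real.sqrt s2 ^ 2 = s2 := Real.sq_sqrt hs2.le
  have hts : Real.sqrt t2 ^ 2 = t2 := Real.sq_sqrt ht2.le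
  have hpoint : ∀ z : ℝ,
      (1 / Real.sqrt s2) * stdPdf ((x - α*z)/Real.sqrt s2) *
        ((1 / Real.sqrt t2) * stdPdf ((y - β*z)/Real.sqrt t2)) * stdPdf z
      = K * Real.exp (-(A/2) * (z - m)^2) := by
    intro z
    unfold stdPdf
    rw [div_pow, div_pow, hss, hts]
    have hexp : -((x - α*z)^2/s2) / 2 + (-((y - β*z)^2/t2) / 2 + -z^2/2)
        = -R/2 + -(A/2) * (z - m)^2 := by
      have hA' : A = (1 - (α*β)^2)/(s2*t2) := by
        rw [hAd]; field_simp; rw [hs2d, ht2d]; ring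
      rw [hRd, hmd, hA']
      generalize hD : 1 - (α*β)^2 = D at hρ2 ⊢
      have e3 : D ≠ 0 := hρ2.ne'
      field_simp
      rw [← hD, hs2d, ht2d]
      ring
    calc 1 / Real.sqrt s2 * (1 / Real.sqrt (2*Real.pi) * Real.exp (-((x - α*z)^2/s2) / 2)) *
          (1 / Real.sqrt t2 * (1 / Real.sqrt (2*Real.pi) * Real.exp (-((y - β*z)^2/t2) / 2))) *
          (1 / Real.sqrt (2*Real.pi) * Real.exp (-z^2/2))
        = (1 / (Real.sqrt s2 * Real.sqrt t2)) * (1/Real.sqrt (2*Real.pi))^3 *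
            Real.exp (-((x - α*z)^2/s2) / 2 + (-((y - β*z)^2/t2) / 2 + -z^2/2)) := by
          rw [Real.exp_add, Real.exp_add]; ring
      _ = K * Real.exp (-(A/2) * (z - m)^2) := by
          rw [hexp, Real.exp_add, hKd]; ring
  calc (∫ z, (1 / Real.sqrt s2) * stdPdf ((x - α*z)/Real.sqrt s2) *
        ((1 / Real.sqrt t2) * stdPdf ((y - β*z)/Real.sqrt t2)) * stdPdf z)
      = ∫ z, K * Real.exp (-(A/2) * (z - m)^2) := by
        exact integral_congr_ae (Filter.Eventually.of_forall hpoint)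
    _ = K * ∫ z, Real.exp (-(A/2) * z^2) := by
        rw [integral_const_mul]
        congr 1
        have : (fun z : ℝ => Real.exp (-(A/2) * (z - m)^2))
            = fun z => (fun w => Real.exp (-(A/2) * w^2)) (z - m) := rfl
        rw [this, integral_sub_right_eq_self (fun w => Real.exp (-(A/2) * w^2)) m]
    _ = K * Real.sqrt (Real.pi / (A/2)) := by rw [integral_gaussian]
    _ = binPdf x y (α*β) := by
        unfold binPdf
        have h1 : Real.sqrt (Real.pi / (A/2)) = Real.sqrt (2*Real.pi) / Real.sqrt A := by
          rw [show Real.pi / (A/2) = (2*Real.pi) / A from by field_simp, Real.sqrt_div hpi.le A]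
        rw [h1, hKd]
        have hsq : Real.sqrt s2 * Real.sqrt t2 * Real.sqrt A = Real.sqrt (1 - (α*β)^2) := by
          rw [← Real.sqrt_mul hs2.le, ← Real.sqrt_mul (mul_nonneg hs2.le ht2.le)]
          congr 1
          have e1 : (1:ℝ) - α^2 ≠ 0 := hs2.ne'
          have e2 : (1:ℝ) - β^2 ≠ 0 := ht2.ne'
          rw [hAd, hs2d, ht2d]; field_simp; ring
        rw [← hsq]
        have hexp2 : -R/2 = -(x^2 - 2*(α*β)*x*y + y^2) / (2*(1 - (α*β)^2)) := by
          rw [hRd]; field_simp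
        rw [hexp2]
        have h2pi : Real.sqrt (2*Real.pi) ^ 2 = 2*Real.pi := Real.sq_sqrt hpi.le
        set q := Real.sqrt (2*Real.pi) with hqd
        set a := Real.sqrt s2 with had
        set b := Real.sqrt t2 with hbd
        set cA := Real.sqrt A with hcd
        have hq0 : q ≠ 0 := by rw [hqd]; positivity
        have hsA : cA ≠ 0 := by rw [hcd]; positivity
        have hss0 : a ≠ 0 := by rw [had]; positivity
        have hts0 : b ≠ 0 := by rw [hbd]; positivity
        rw [← h2pi]
        field_simp

lemma stdCdf_shift (c b : ℝ) {r : ℝ} (hr : 0 < r) :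
    stdCdf ((b - c) / r) = ∫ x in Set.Iio b, (1/r) * stdPdf ((x - c) / r) := by
  rw [integral_const_mul, integral_Iio_affine stdPdf c b hr, stdCdf]
  field_simp

lemma kernel_nonneg (c x r : ℝ) (hr : 0 < r) : 0 ≤ (1/r) * stdPdf ((x - c)/r) :=
  mul_nonneg (by positivity) (stdPdf_nonneg _)

lemma continuous_kernel (c r : ℝ) : Continuous (fun x : ℝ => (1/r) * stdPdf ((x - c)/r)) :=
  continuous_const.mul (continuous_stdPdf.comp ((continuous_id.sub continuous_const).div_const r))

lemma lintegral_kernel (c : ℝ) {r : ℝ} (hr : 0 < r) :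
    ∫⁻ x, ENNReal.ofReal ((1/r) * stdPdf ((x - c)/r)) = 1 := by
  rw [← ofReal_integral_eq_lintegral_ofReal (integrable_kernel c hr)
    (Filter.Eventually.of_forall fun x => kernel_nonneg c x r hr)]
  rw [integral_kernel c hr, ENNReal.ofReal_one]

set_option maxHeartbeats 2000000 in
theorem key_rep (h k α β : ℝ) (hα : α ∈ Set.Ioo (-1:ℝ) 1) (hβ : β ∈ Set.Ioo (-1:ℝ) 1) :
    binCdf h k (α*β) =
      ∫ z : ℝ, stdCdf ((h - α * z) / Real.sqrt (1 - α ^ 2)) *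
        stdCdf ((k - β * z) / Real.sqrt (1 - β ^ 2)) * stdPdf z := by
  have hα1 := hα.1; have hα2 := hα.2
  have hβ1 := hβ.1; have hβ2 := hβ.2
  have hs2 : (0:ℝ) < 1 - α^2 := by nlinarith
  have ht2 : (0:ℝ) < 1 - β^2 := by nlinarith
  have hρ2 : (0:ℝ) < 1 - (α*β)^2 := by nlinarith
  set s := Real.sqrt (1 - α^2) with hsd
  set t := Real.sqrt (1 - β^2) with htd
  have hs : 0 < s := Real.sqrt_pos.2 hs2
  have ht : 0 < t := Real.sqrt_pos.2 ht2
  set μ := (volume : Measure ℝ).restrict (Set.Iio h) with hμd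
  set ν := (volume : Measure ℝ).restrict (Set.Iio k) with hνd
  set F : ℝ × ℝ × ℝ → ℝ := fun q =>
    (1/s) * stdPdf ((q.2.1 - α*q.1)/s) * ((1/t) * stdPdf ((q.2.2 - β*q.1)/t)) * stdPdf q.1
    with hFd
  have hFnn : ∀ q, 0 ≤ F q := fun q =>
    mul_nonneg (mul_nonneg (kernel_nonneg _ _ _ hs) (kernel_nonneg _ _ _ ht)) (stdPdf_nonneg _)
  have hFcont : Continuous F := by
    apply Continuous.mul (Continuous.mul ?_ ?_) (continuous_stdPdf.comp continuous_fst)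
    · exact continuous_const.mul (continuous_stdPdf.comp
        (((continuous_fst.comp continuous_snd).sub (continuous_const.mul continuous_fst)).div_const s))
    · exact continuous_const.mul (continuous_stdPdf.comp
        (((continuous_snd.comp continuous_snd).sub (continuous_const.mul continuous_fst)).div_const t))
  have hle : (μ.prod ν) ≤ ((volume : Measure ℝ).prod volume) := by
    rw [hμd, hνd, Measure.prod_restrict]
    exact Measure.restrict_le_self
  have hbound : ∀ z : ℝ, (∫⁻ p : ℝ × ℝ, ENNReal.ofReal (F (z, p)) ∂(μ.prod ν))
      ≤ ENNReal.ofReal (stdPdf z) := by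
    intro z
    calc (∫⁻ p : ℝ × ℝ, ENNReal.ofReal (F (z, p)) ∂(μ.prod ν))
        ≤ ∫⁻ p : ℝ × ℝ, ENNReal.ofReal (F (z, p)) ∂((volume : Measure ℝ).prod volume) :=
          lintegral_mono' hle le_rfl
      _ = (∫⁻ x, ENNReal.ofReal ((1/s) * stdPdf ((x - α*z)/s))) *
            ∫⁻ y, ENNReal.ofReal ((1/t) * stdPdf ((y - β*z)/t) * stdPdf z) := by
          rw [← lintegral_prod_mul (g := fun y => ENNReal.ofReal ((1/t) * stdPdf ((y - β*z)/t) * stdPdf z))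
            ((continuous_kernel (α*z) s).measurable.ennreal_ofReal.aemeasurable)
            (((continuous_kernel (β*z) t).mul continuous_const).measurable.ennreal_ofReal.aemeasurable)]
          congr 1; funext p
          rw [← ENNReal.ofReal_mul (kernel_nonneg _ _ _ hs), hFd]
          ring_nf
      _ = ENNReal.ofReal (stdPdf z) := by
          rw [lintegral_kernel (α*z) hs, one_mul]
          have heq : ∀ y : ℝ, ENNReal.ofReal ((1/t) * stdPdf ((y - β*z)/t) * stdPdf z)
              = ENNReal.ofReal (stdPdf z) * ENNReal.ofReal ((1/t) * stdPdf ((y - β*z)/t)) := by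
            intro y
            rw [mul_comm ((1/t) * stdPdf ((y - β*z)/t)) (stdPdf z),
              ENNReal.ofReal_mul (stdPdf_nonneg z)]
          simp_rw [heq]
          rw [lintegral_const_mul' _ _ ENNReal.ofReal_ne_top, lintegral_kernel (β*z) ht, mul_one]
  have hFint : Integrable (fun q : ℝ × (ℝ × ℝ) => F q) (volume.prod (μ.prod ν)) := by
    constructor
    · exact hFcont.aestronglyMeasurable
    · rw [hasFiniteIntegral_iff_ofReal (Filter.Eventually.of_forall hFnn)]
      rw [lintegral_prod _ (hFcont.measurable.ennreal_ofReal.aemeasurable)]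
      calc (∫⁻ z, ∫⁻ p : ℝ × ℝ, ENNReal.ofReal (F (z, p)) ∂(μ.prod ν))
          ≤ ∫⁻ z, ENNReal.ofReal (stdPdf z) := lintegral_mono hbound
        _ = 1 := by
            rw [← ofReal_integral_eq_lintegral_ofReal integrable_stdPdf
              (Filter.Eventually.of_forall stdPdf_nonneg), integral_stdPdf, ENNReal.ofReal_one]
        _ < ⊤ := ENNReal.one_lt_top
  -- integrability of the bivariate density on the restricted product measure
  have habsα : |α| < 1 := abs_lt.2 ⟨hα1, hα2⟩
  have habsβ : |β| < 1 := abs_lt.2 ⟨hβ1, hβ2⟩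
  have habs : |α*β| < 1 := by
    rw [abs_mul]
    nlinarith [abs_nonneg α, abs_nonneg β]
  set ε : ℝ := (1 - |α*β|)/(2*(1 - (α*β)^2)) with hεd
  have hε : 0 < ε := div_pos (by linarith) (by linarith)
  have hbinnn : ∀ p : ℝ × ℝ, 0 ≤ binPdf p.1 p.2 (α*β) := by
    intro p; unfold binPdf
    have : 0 < Real.sqrt (1 - (α*β)^2) := Real.sqrt_pos.2 hρ2
    positivity
  have hbincont : Continuous (fun p : ℝ × ℝ => binPdf p.1 p.2 (α*β)) := by
    unfold binPdf; fun_prop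
  have hbinint : Integrable (Function.uncurry fun x y => binPdf x y (α*β)) (μ.prod ν) := by
    have hg : Integrable (fun p : ℝ × ℝ =>
        (1/(2*Real.pi*Real.sqrt (1-(α*β)^2))) *
          (Real.exp (-ε*p.1^2) * Real.exp (-ε*p.2^2))) ((volume : Measure ℝ).prod volume) :=
      ((integrable_exp_neg_mul_sq hε).mul_prod (integrable_exp_neg_mul_sq hε)).const_mul _
    have hb : ∀ p : ℝ × ℝ, ‖binPdf p.1 p.2 (α*β)‖ ≤
        (1/(2*Real.pi*Real.sqrt (1-(α*β)^2))) *
          (Real.exp (-ε*p.1^2) * Real.exp (-ε*p.2^2)) := by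
      intro p
      rw [Real.norm_eq_abs, abs_of_nonneg (hbinnn p)]
      unfold binPdf
      rw [← Real.exp_add]
      have hC : 0 ≤ 1/(2*Real.pi*Real.sqrt (1-(α*β)^2)) := by
        have : 0 < Real.sqrt (1 - (α*β)^2) := Real.sqrt_pos.2 hρ2
        positivity
      apply mul_le_mul_of_nonneg_left _ hC
      apply Real.exp_le_exp.2
      have hk1 : (α*β)*(p.1*p.2) ≤ |α*β| * (|p.1| * |p.2|) := by
        calc (α*β)*(p.1*p.2) ≤ |(α*β)*(p.1*p.2)| := le_abs_self _
          _ = |α*β| * (|p.1| * |p.2|) := by rw [abs_mul, abs_mul, abs_mul]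
      have hk2 : 2 * (|p.1| * |p.2|) ≤ p.1^2 + p.2^2 := by
        nlinarith [sq_nonneg (|p.1| - |p.2|), sq_abs p.1, sq_abs p.2]
      have hkey : 2*(α*β)*(p.1*p.2) ≤ |α*β| * (p.1^2+p.2^2) := by
        nlinarith [mul_le_mul_of_nonneg_left hk2 (abs_nonneg (α*β)), hk1]
      have heq : -ε*p.1^2 + -ε*p.2^2
          = (-((1 - |α*β|) * (p.1^2+p.2^2))) / (2*(1 - (α*β)^2)) := by
        rw [hεd]; field_simp; ring
      have hden : (0:ℝ) < 2*(1 - (α*β)^2) := by linarith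
      have hnum : -(p.1^2 - 2*(α*β)*p.1*p.2 + p.2^2) ≤ -((1 - |α*β|) * (p.1^2+p.2^2)) := by
        nlinarith [hkey]
      rw [heq]
      exact (div_le_div_iff_of_pos_right hden).2 hnum
    rw [hμd, hνd, Measure.prod_restrict]
    exact (hg.mono' hbincont.aestronglyMeasurable (Filter.Eventually.of_forall hb)).restrict
  -- main computation
  symm
  calc (∫ z : ℝ, stdCdf ((h - α * z) / s) * stdCdf ((k - β * z) / t) * stdPdf z)
      = ∫ z : ℝ, (∫ p : ℝ × ℝ,
          (1/s) * stdPdf ((p.1 - α*z)/s) * ((1/t) * stdPdf ((p.2 - β*z)/t)) ∂(μ.prod ν))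
          * stdPdf z := by
        refine integral_congr_ae (Filter.Eventually.of_forall fun z => ?_)
        simp only []
        rw [stdCdf_shift (α*z) h hs, stdCdf_shift (β*z) k ht, ← integral_prod_mul]
    _ = ∫ z : ℝ, ∫ p : ℝ × ℝ, F (z, p) ∂(μ.prod ν) := by
        refine integral_congr_ae (Filter.Eventually.of_forall fun z => ?_)
        simp only []
        rw [← integral_mul_const]
    _ = ∫ p : ℝ × ℝ, (∫ z : ℝ, F (z, p)) ∂(μ.prod ν) := integral_integral_swap hFint
    _ = ∫ p : ℝ × ℝ, binPdf p.1 p.2 (α*β) ∂(μ.prod ν) := by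
        refine integral_congr_ae (Filter.Eventually.of_forall fun p => ?_)
        exact conv_eq_binPdf p.1 p.2 hα hβ
    _ = binCdf h k (α*β) := by
        rw [binCdf]
        exact (integral_integral hbinint).symm

theorem copula_single_integral_rep (u v α β ρ : ℝ)
    (hu : u ∈ Set.Ioo (0 : ℝ) 1) (hv : v ∈ Set.Ioo (0 : ℝ) 1)
    (hα : α ∈ Set.Ioo (-1 : ℝ) 1) (hβ : β ∈ Set.Ioo (-1 : ℝ) 1)
    (hα0 : α ≠ 0) (hβ0 : β ≠ 0) (hρ : ρ = α * β) :
    normCopula u v ρ =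
      ∫ z : ℝ,
        stdCdf ((stdQuantile u - α * z) / Real.sqrt (1 - α ^ 2)) *
          stdCdf ((stdQuantile v - β * z) / Real.sqrt (1 - β ^ 2)) *
          stdPdf z := by
  subst hρ
  unfold normCopula
  exact key_rep (stdQuantile u) (stdQuantile v) α β hα hβ
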